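/- arXiv:1910.03786 — 5 statements merged into one kernel-verified Lean document; each statement's English description precedes it below -/
import Mathlib

section
/- If T > R > S > P and m ≥ 2, then (T + (m−1)P)/m is strictly less than both (⌈m/2⌉T + ⌊m/2⌋S)/m and (⌈(m−2)/2⌉S + ⌊m/2⌋T)/(m−1). -/
theorem stmt_3 (T R S P : ℝ) (m : ℕ) (hTR : T > R) (hRS : R > S) (hSP : S > P)
    (hm : 2 ≤ m) :
    (T + ((m : ℝ) - 1) * P) / (m : ℝ)
        < ((((m + 1) / 2 : ℕ) : ℝ) * T + ((m / 2 : ℕ) : ℝ) * S) / (m : ℝ) ∧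
    (T + ((m : ℝ) - 1) * P) / (m : ℝ)
        < ((((m - 1) / 2 : ℕ) : ℝ) * S + ((m / 2 : ℕ) : ℝ) * T) / ((m : ℝ) - 1) := by
  have hab : ((m + 1) / 2 : ℕ) + (m / 2 : ℕ) = m := by omega
  have hbc : ((m - 1) / 2 : ℕ) + (m / 2 : ℕ) = m - 1 := by omega
  have hb1 : 1 ≤ (m / 2 : ℕ) := by omega
  set a := ((m + 1) / 2 : ℕ)
  set b := (m / 2 : ℕ)
  set c := ((m - 1) / 2 : ℕ)
  have habR : (a : ℝ) + b = m := by exact_mod_cast congrArg (Nat.cast : ℕ → ℝ) hab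
  have hbcR : (c : ℝ) + b = (m : ℝ) - 1 := by
    have : ((c + b : ℕ) : ℝ) = ((m - 1 : ℕ) : ℝ) := by exact_mod_cast congrArg (Nat.cast : ℕ → ℝ) hbc
    push_cast [Nat.cast_sub (by omega : 1 ≤ m)] at this
    linarith
  have hbR : (1 : ℝ) ≤ b := by exact_mod_cast hb1
  have hmR : (2 : ℝ) ≤ m := by exact_mod_cast hm
  have hm0 : (0 : ℝ) < m := by linarith
  have hm1 : (0 : ℝ) < (m : ℝ) - 1 := by linarith
  have hTP : T - P > 0 := by linarith
  have hTS : T - S > 0 := by linarith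
  have hSPp : S - P > 0 := by linarith
  have ha1 : (1:ℝ) ≤ a := by linarith
  have hcR : (0:ℝ) ≤ c := Nat.cast_nonneg c
  have hmab : (m:ℝ) = (a:ℝ) + b := habR.symm
  have hmcb : (m:ℝ) = (c:ℝ) + b + 1 := by linarith
  constructor
  · rw [div_lt_div_iff₀ hm0 hm0, hmab]
    nlinarith [mul_nonneg (by linarith : (0:ℝ) ≤ (a:ℝ) - 1) hTP.le,
      mul_nonneg (by linarith : (0:ℝ) ≤ (b:ℝ) - 1) hSPp.le,
      mul_pos (by linarith : (0:ℝ) < (a:ℝ) + b) hSPp,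
      mul_nonneg (mul_nonneg (by linarith : (0:ℝ) ≤ (a:ℝ) + b) (by linarith : (0:ℝ) ≤ (a:ℝ) - 1)) hTP.le,
      mul_nonneg (mul_nonneg (by linarith : (0:ℝ) ≤ (a:ℝ) + b) (by linarith : (0:ℝ) ≤ (b:ℝ) - 1)) hSPp.le]
  · rw [div_lt_div_iff₀ hm0 hm1, hmcb]
    nlinarith [mul_pos (mul_pos (by linarith : (0:ℝ) < (c:ℝ) + b) (by linarith : (0:ℝ) < (c:ℝ) + b)) hSPp,
      mul_nonneg (mul_nonneg hcR (by linarith : (0:ℝ) ≤ (b:ℝ) - 1)) hTS.le,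
      mul_nonneg (mul_nonneg (by linarith : (0:ℝ) ≤ (b:ℝ)) (by linarith : (0:ℝ) ≤ (b:ℝ))) hTS.le]
end

section
/- Let T > R > S > P and m ≥ 2, and let A' be the transformed repeated-snowdrift payoff matrix with a'₁₄ = m(S−P), a'₄₁ = m(T−R), zeros elsewhere in rows/columns {1,4}∩{1,4} as specified. Then the state x14 = (a'₁₄/(a'₁₄+a'₄₁), 0, 0, a'₄₁/(a'₁₄+a'₄₁)) is an evolutionarily stable state: for all y in the simplex, x14ᵀA'x14 ≥ yᵀA'x14, and whenever equality holds with y ≠ x14, x14ᵀA'y > yᵀA'y. -/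
open Matrix

theorem stmt_10 (T R S P : ℝ) (m : ℕ) (hTR : T > R) (hRS : R > S) (hSP : S > P)
    (hm : 2 ≤ m) :
    let A' : Matrix (Fin 4) (Fin 4) ℝ :=
      !![0, 0, S + ((m : ℝ) - 1) * R - m * P, (m : ℝ) * (S - P);
         0, 0, (((m + 1) / 2 : ℕ) : ℝ) * S + ((m / 2 : ℕ) : ℝ) * T - m * P, S - P;
         T - R, (((m + 1) / 2 : ℕ) : ℝ) * T + ((m / 2 : ℕ) : ℝ) * S - m * R, 0, 0;
         (m : ℝ) * (T - R), T + ((m : ℝ) - 1) * P - m * R, 0, 0]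
    let a14 := (m : ℝ) * (S - P)
    let a41 := (m : ℝ) * (T - R)
    let x14 : Fin 4 → ℝ := ![a14 / (a14 + a41), 0, 0, a41 / (a14 + a41)]
    (∀ y : Fin 4 → ℝ, (∀ i, 0 ≤ y i) → ∑ i, y i = 1 →
        y ⬝ᵥ A'.mulVec x14 ≤ x14 ⬝ᵥ A'.mulVec x14) ∧
    (∀ y : Fin 4 → ℝ, (∀ i, 0 ≤ y i) → ∑ i, y i = 1 →
        x14 ⬝ᵥ A'.mulVec x14 = y ⬝ᵥ A'.mulVec x14 → y ≠ x14 →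
        y ⬝ᵥ A'.mulVec y < x14 ⬝ᵥ A'.mulVec y) := by
  intro A' a14 a41 x14
  have hm2 : (2:ℝ) ≤ (m:ℝ) := by exact_mod_cast hm
  have hSP' : (0:ℝ) < S - P := by linarith
  have hTR' : (0:ℝ) < T - R := by linarith
  have ha14 : 0 < a14 := mul_pos (by linarith) hSP'
  have ha41 : 0 < a41 := mul_pos (by linarith) hTR'
  have hs : 0 < a14 + a41 := by linarith
  have hs' : a14 + a41 ≠ 0 := ne_of_gt hs
  have key1 : 0 < a14 - (S - P) := by
    have h : a14 - (S - P) = ((m:ℝ) - 1) * (S - P) := by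
      show (m:ℝ) * (S - P) - (S - P) = _; ring
    rw [h]; exact mul_pos (by linarith) hSP'
  have key2 : 0 < a41 - (T - R) := by
    have h : a41 - (T - R) = ((m:ℝ) - 1) * (T - R) := by
      show (m:ℝ) * (T - R) - (T - R) = _; ring
    rw [h]; exact mul_pos (by linarith) hTR'
  -- A'.mulVec x14 computed explicitly
  have hmul : A'.mulVec x14 = ![a14 * a41 / (a14 + a41), (S - P) * a41 / (a14 + a41),
      (T - R) * a14 / (a14 + a41), a41 * a14 / (a14 + a41)] := by
    funext i
    fin_cases i <;>
      simp [A', x14, a14, a41, Matrix.mulVec, dotProduct, Fin.sum_univ_four] <;>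
      field_simp <;> try ring
  have hL : ∀ y : Fin 4 → ℝ, y ⬝ᵥ A'.mulVec x14 =
      (y 0 * (a14 * a41) + y 1 * ((S - P) * a41) + y 2 * ((T - R) * a14) + y 3 * (a41 * a14))
        / (a14 + a41) := by
    intro y
    rw [hmul]
    simp only [dotProduct, Fin.sum_univ_four, Matrix.cons_val_zero, Matrix.cons_val_one,
      Matrix.head_cons, Matrix.cons_val_two, Matrix.tail_cons, Matrix.cons_val_three]
    field_simp
    try ring
  have hR : x14 ⬝ᵥ A'.mulVec x14 = a14 * a41 / (a14 + a41) := by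
    rw [hL]
    show (a14 / (a14 + a41) * (a14 * a41) + 0 * ((S - P) * a41) + 0 * ((T - R) * a14) +
        a41 / (a14 + a41) * (a41 * a14)) / (a14 + a41) = a14 * a41 / (a14 + a41)
    field_simp
    ring
  constructor
  · intro y hy hsum
    have h0 := hy 0; have h1 := hy 1; have h2 := hy 2; have h3 := hy 3
    have hsum' : y 0 + y 1 + y 2 + y 3 = 1 := by
      simpa [Fin.sum_univ_four] using hsum
    rw [hL, hR, div_le_div_iff₀ hs hs]
    have hsc : (y 0 + y 1 + y 2 + y 3) * (a14 * a41) = a14 * a41 := by rw [hsum']; ring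
    nlinarith [mul_nonneg (mul_nonneg h1 key1.le) ha41.le,
      mul_nonneg (mul_nonneg h2 key2.le) ha14.le, hsc,
      mul_pos hs (mul_pos ha14 ha41)]
  · intro y hy hsum heq hne
    have h0 := hy 0; have h1 := hy 1; have h2 := hy 2; have h3 := hy 3
    have hsum' : y 0 + y 1 + y 2 + y 3 = 1 := by
      simpa [Fin.sum_univ_four] using hsum
    rw [hR, hL, div_eq_div_iff hs' hs'] at heq
    have hnum : a14 * a41 =
        y 0 * (a14 * a41) + y 1 * ((S - P) * a41) + y 2 * ((T - R) * a14) + y 3 * (a41 * a14) :=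
      mul_right_cancel₀ hs' heq
    have hsc : (y 0 + y 1 + y 2 + y 3) * (a14 * a41) = a14 * a41 := by rw [hsum']; ring
    have hzero : y 1 * (a41 * (a14 - (S - P))) + y 2 * (a14 * (a41 - (T - R))) = 0 := by
      linear_combination hnum + hsc
    have key1' : 0 < a41 * (a14 - (S - P)) := mul_pos ha41 key1
    have key2' : 0 < a14 * (a41 - (T - R)) := mul_pos ha14 key2
    have n1 : 0 ≤ y 1 * (a41 * (a14 - (S - P))) := mul_nonneg h1 key1'.le
    have n2 : 0 ≤ y 2 * (a14 * (a41 - (T - R))) := mul_nonneg h2 key2'.le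
    have ht1 : y 1 * (a41 * (a14 - (S - P))) = 0 := by linarith
    have ht2 : y 2 * (a14 * (a41 - (T - R))) = 0 := by linarith
    have hy1 : y 1 = 0 := by
      rcases mul_eq_zero.mp ht1 with h | h
      · exact h
      · exact absurd h key1'.ne'
    have hy2 : y 2 = 0 := by
      rcases mul_eq_zero.mp ht2 with h | h
      · exact h
      · exact absurd h key2'.ne'
    have h03 : y 0 + y 3 = 1 := by linarith
    -- A'.mulVec y explicitly
    have hmuly : A'.mulVec y = ![a14 * y 3, (S - P) * y 3, (T - R) * y 0, a41 * y 0] := by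
      funext i
      fin_cases i <;>
        simp [A', a14, a41, Matrix.mulVec, dotProduct, Fin.sum_univ_four, hy1, hy2] <;>
        try ring
    have hLy : y ⬝ᵥ A'.mulVec y = y 0 * (a14 * y 3) + y 3 * (a41 * y 0) := by
      rw [hmuly]
      simp only [dotProduct, Fin.sum_univ_four, Matrix.cons_val_zero, Matrix.cons_val_one,
        Matrix.head_cons, Matrix.cons_val_two, Matrix.tail_cons, Matrix.cons_val_three, hy1, hy2]
      ring
    have hRy : x14 ⬝ᵥ A'.mulVec y = (a14 ^ 2 * y 3 + a41 ^ 2 * y 0) / (a14 + a41) := by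
      rw [hmuly]
      simp only [dotProduct, Fin.sum_univ_four, Matrix.cons_val_zero, Matrix.cons_val_one,
        Matrix.head_cons, Matrix.cons_val_two, Matrix.tail_cons, Matrix.cons_val_three, x14]
      field_simp
      ring
    have hd : a14 * y 3 - a41 * y 0 ≠ 0 := by
      intro h
      apply hne
      have hy0 : y 0 = a14 / (a14 + a41) := by
        field_simp
        linear_combination a14 * h03 - h
      have hy3 : y 3 = a41 / (a14 + a41) := by
        field_simp
        linear_combination a41 * h03 + h
      funext i
      fin_cases i <;> simp [x14, hy0, hy1, hy2, hy3]
    have hsq : 0 < (a14 * y 3 - a41 * y 0) ^ 2 := by positivity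
    rw [hLy, hRy, lt_div_iff₀ hs]
    have hident : a14 ^ 2 * y 3 + a41 ^ 2 * y 0
        - (y 0 * (a14 * y 3) + y 3 * (a41 * y 0)) * (a14 + a41)
        = (a14 * y 3 - a41 * y 0) ^ 2 := by
      have h3' : y 3 = 1 - y 0 := by linarith
      rw [h3']
      ring
    linarith [hsq, hident]
end

section
/- Let T > R > S > P and m ≥ 2. With a'₄₂ = T+(m−1)P−mR, a'₃₂ = ⌈m/2⌉T+⌊m/2⌋S−mR, a'₄₁ = m(T−R), a'₃₁ = T−R, the quantity b₂ = −(a'₄₂−a'₃₂)/(a'₄₁−a'₃₁) is always strictly positive. -/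
theorem stmt_15 (T R S P : ℝ) (m : ℕ) (hTR : T > R) (hRS : R > S) (hSP : S > P)
    (hm : 2 ≤ m) :
    -((T + ((m : ℝ) - 1) * P - m * R)
        - ((((m + 1) / 2 : ℕ) : ℝ) * T + ((m / 2 : ℕ) : ℝ) * S - m * R))
      / (((m : ℝ) * (T - R)) - (T - R)) > 0 := by
  have hcf : (m + 1) / 2 + m / 2 = m := by omega
  have hc : 1 ≤ (m + 1) / 2 := by omega
  have hf : 1 ≤ m / 2 := by omega
  have hcf' : (((m + 1) / 2 : ℕ) : ℝ) + ((m / 2 : ℕ) : ℝ) = m := by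
    exact_mod_cast congrArg (Nat.cast : ℕ → ℝ) hcf
  have hc' : (1 : ℝ) ≤ (((m + 1) / 2 : ℕ) : ℝ) := by exact_mod_cast hc
  have hf' : (1 : ℝ) ≤ ((m / 2 : ℕ) : ℝ) := by exact_mod_cast hf
  set c : ℝ := (((m + 1) / 2 : ℕ) : ℝ) with hcdef
  set f : ℝ := ((m / 2 : ℕ) : ℝ) with hfdef
  apply div_pos
  · have h1 : 0 ≤ (c - 1) * (T - P) :=
      mul_nonneg (by linarith) (by linarith)
    have h2 : 1 * (S - P) ≤ f * (S - P) :=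
      mul_le_mul_of_nonneg_right hf' (by linarith)
    have h3 : (m : ℝ) * P = c * P + f * P := by rw [← hcf']; ring
    nlinarith [mul_nonneg (show (0:ℝ) ≤ (((m+1)/2:ℕ):ℝ) - 1 by linarith) (show (0:ℝ) ≤ T - P by linarith), mul_le_mul_of_nonneg_right hf' (show (0:ℝ) ≤ S - P by linarith)]
  · have hm' : (2 : ℝ) ≤ (m : ℝ) := by exact_mod_cast hm
    nlinarith
end

section
/- Let T > R > S > P and m ≥ 2. Then the difference of average cooperation levels satisfies x23_C − x14_C = (T−S)/(2(T−R+S−P)) > 0 when m is even, and ((m−1)(T−S))/(2m(T−R+S−P)) > 0 when m is odd. -/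
theorem stmt_17 (T R S P : ℝ) (m : ℕ) (hTR : T > R) (hRS : R > S) (hSP : S > P)
    (hm : 2 ≤ m) :
    let x14C : ℝ := (S - P) / (S - P + T - R)
    let w2 : ℝ := ((((m + 1) / 2 : ℕ) : ℝ) * S + ((m / 2 : ℕ) : ℝ) * T - m * P)
                    / ((m : ℝ) * (T + S - P - R))
    let w3 : ℝ := ((((m + 1) / 2 : ℕ) : ℝ) * T + ((m / 2 : ℕ) : ℝ) * S - m * R)
                    / ((m : ℝ) * (T + S - P - R))
    let x23C : ℝ := w2 * w2 * ((2 * (m : ℝ)) / (2 * (m : ℝ)))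
                    + w2 * w3 * ((m : ℝ) / (2 * (m : ℝ)))
                    + w3 * w2 * ((m : ℝ) / (2 * (m : ℝ)))
                    + w3 * w3 * (0 / (2 * (m : ℝ)))
    (Even m → x23C - x14C = (T - S) / (2 * (T - R + S - P)) ∧ x23C - x14C > 0) ∧
    (Odd m → x23C - x14C = ((m : ℝ) - 1) * (T - S) / (2 * m * (T - R + S - P)) ∧
      x23C - x14C > 0) := by
  intro x14C w2 w3 x23C
  have hD : T + S - P - R > 0 := by linarith
  have hD' : S - P + T - R > 0 := by linarith
  have hD2 : T - R + S - P > 0 := by linarith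
  have hm0 : (0:ℝ) < (m:ℝ) := by positivity
  have hab : (((m + 1) / 2 : ℕ) : ℝ) + ((m / 2 : ℕ) : ℝ) = (m : ℝ) := by
    exact_mod_cast congrArg (Nat.cast (R := ℝ)) (show (m + 1) / 2 + m / 2 = m by omega)
  have hw : w2 + w3 = 1 := by
    simp only [w2, w3]
    rw [← add_div, div_eq_one_iff_eq (by positivity)]
    linear_combination (S + T) * hab
  have hw3 : w3 = 1 - w2 := by linarith
  have e1 : (2 * (m:ℝ)) / (2 * (m:ℝ)) = 1 := div_self (by positivity)
  have e2 : (m:ℝ) / (2 * (m:ℝ)) = 1 / 2 := by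
    rw [div_eq_div_iff (by positivity) (by norm_num)]; ring
  have hx : x23C = w2 := by
    simp only [x23C]
    rw [e1, e2, hw3]; ring
  constructor
  · rintro ⟨k, rfl⟩
    have hk : 1 ≤ k := by omega
    have hk0 : (0:ℝ) < (k:ℝ) := by exact_mod_cast hk
    have h1 : ((k + k + 1) / 2 : ℕ) = k := by omega
    have h2 : ((k + k) / 2 : ℕ) = k := by omega
    have heq : x23C - x14C = (T - S) / (2 * (T - R + S - P)) := by
      rw [hx]
      simp only [w2, x14C, h1, h2]
      push_cast
      field_simp
      ring
    exact ⟨heq, heq ▸ div_pos (by linarith) (by linarith)⟩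
  · rintro ⟨k, rfl⟩
    have hk : 1 ≤ k := by omega
    have hk0 : (0:ℝ) < (k:ℝ) := by exact_mod_cast hk
    have h1 : ((2 * k + 1 + 1) / 2 : ℕ) = k + 1 := by omega
    have h2 : ((2 * k + 1) / 2 : ℕ) = k := by omega
    have heq : x23C - x14C
        = (((2 * k + 1 : ℕ) : ℝ) - 1) * (T - S) / (2 * ((2 * k + 1 : ℕ) : ℝ) * (T - R + S - P)) := by
      rw [hx]
      simp only [w2, x14C, h1, h2]
      push_cast
      field_simp
      ring
    refine ⟨heq, heq ▸ div_pos ?_ ?_⟩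
    · push_cast
      have : (2 * (k:ℝ) + 1 - 1) = 2 * k := by ring
      rw [this]
      exact mul_pos (by positivity) (by linarith)
    · push_cast; nlinarith
end

section
/- Let T > R > S > P and m ≥ 2. No point of the edge X34 = {(0,0,α,1−α) : α ∈ [0,1]} is a symmetric Nash equilibrium of the transformed payoff matrix A': for every x ∈ X34 there exists y in the simplex with yᵀA'x > xᵀA'x. -/
open Matrix

theorem stmt_19 (T R S P : ℝ) (m : ℕ) (hTR : T > R) (hRS : R > S) (hSP : S > P)
    (hm : 2 ≤ m) :
    let A' : Matrix (Fin 4) (Fin 4) ℝ :=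
      !![0, 0, S + ((m : ℝ) - 1) * R - m * P, (m : ℝ) * (S - P);
         0, 0, (((m + 1) / 2 : ℕ) : ℝ) * S + ((m / 2 : ℕ) : ℝ) * T - m * P, S - P;
         T - R, (((m + 1) / 2 : ℕ) : ℝ) * T + ((m / 2 : ℕ) : ℝ) * S - m * R, 0, 0;
         (m : ℝ) * (T - R), T + ((m : ℝ) - 1) * P - m * R, 0, 0]
    ∀ α : ℝ, α ∈ Set.Icc (0 : ℝ) 1 →
      ∃ y : Fin 4 → ℝ, (∀ i, 0 ≤ y i) ∧ ∑ i, y i = 1 ∧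
        y ⬝ᵥ A'.mulVec ![0, 0, α, 1 - α] > ![0, 0, α, 1 - α] ⬝ᵥ A'.mulVec ![0, 0, α, 1 - α] := by
  intro A' α hα
  obtain ⟨hα0, hα1⟩ := hα
  refine ⟨![1, 0, 0, 0], ?_, ?_, ?_⟩
  · intro i; fin_cases i <;> norm_num
  · simp [Fin.sum_univ_four]
  · have hm2 : (2 : ℝ) ≤ (m : ℝ) := by exact_mod_cast hm
    simp only [A', Matrix.mulVec, dotProduct, Fin.sum_univ_four,
      Matrix.cons_val_zero, Matrix.cons_val_one, Matrix.head_cons,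
      Matrix.cons_val_two, Matrix.tail_cons, Matrix.cons_val_three,
      Matrix.cons_val', Matrix.head_fin_const, Matrix.empty_val',
      Matrix.cons_val_fin_one, Matrix.of_apply]
    nlinarith [mul_nonneg hα0 (sub_pos.mpr (lt_trans hSP hRS)).le,
      mul_nonneg (sub_nonneg.mpr hα1) (sub_pos.mpr hSP).le]
end
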